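/- Let ε ∈ ℝ^n have i.i.d. N(0, σ²) coordinates with σ > 0. Then for every x > 0: P( ‖ε‖_n² ≤ σ²(1 + 2x + 2x²) ) ≥ 1 − exp( −n·x² ). -/

import Mathlib

open scoped BigOperators

/-- The normalized norm `‖a‖_n = sqrt( (∑ a_j^2) / n )`. -/
noncomputable def normN {n : ℕ} (a : Fin n → ℝ) : ℝ :=
  Real.sqrt ((∑ j, a j ^ 2) / n)

/-- `Ω` is a norm on `ℝ^p`. -/
def IsNorm {p : ℕ} (Ω : (Fin p → ℝ) → ℝ) : Prop :=
  (∀ x y, Ω (x + y) ≤ Ω x + Ω y) ∧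
  (∀ (c : ℝ) (x), Ω (c • x) = |c| * Ω x) ∧
  (∀ x, Ω x = 0 → x = 0)

/-- The dual norm `Ω*(x) = max_{Ω(z) ≤ 1} zᵀx`. -/
noncomputable def dualNorm {p : ℕ} (Ω : (Fin p → ℝ) → ℝ) (x : Fin p → ℝ) : ℝ :=
  sSup {r | ∃ z, Ω z ≤ 1 ∧ r = ∑ i, z i * x i}

/-- `β_S` : the restriction of `β` to `S`, extended by zero off `S`. -/
def restrict {p : ℕ} (S : Finset (Fin p)) (β : Fin p → ℝ) : Fin p → ℝ :=
  fun i => if i ∈ S then β i else 0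

/-- `Ω'` is a norm on the coordinates in `Sᶜ` (definiteness is required only for
vectors vanishing on `S`). -/
def IsNormOn {p : ℕ} (S : Finset (Fin p)) (Ω' : (Fin p → ℝ) → ℝ) : Prop :=
  (∀ x y, Ω' (x + y) ≤ Ω' x + Ω' y) ∧
  (∀ (c : ℝ) (x), Ω' (c • x) = |c| * Ω' x) ∧
  (∀ x, (∀ i ∈ S, x i = 0) → Ω' x = 0 → x = 0)

/-- `Ω` is weakly decomposable for the (allowed) set `S`, with associated norm `Ωc`
on the coordinates in `Sᶜ`. -/
def WeaklyDecomposable {p : ℕ} (Ω : (Fin p → ℝ) → ℝ) (S : Finset (Fin p))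
    (Ωc : (Fin p → ℝ) → ℝ) : Prop :=
  IsNorm Ω ∧ IsNormOn S Ωc ∧
  ∀ β : Fin p → ℝ, Ω (restrict S β) + Ωc (restrict Sᶜ β) ≤ Ω β

/-- The `Ω`-eigenvalue `δ_Ω(L,S)`. -/
noncomputable def omegaEigen {n p : ℕ} (X : Matrix (Fin n) (Fin p) ℝ)
    (Ω Ωc : (Fin p → ℝ) → ℝ) (S : Finset (Fin p)) (L : ℝ) : ℝ :=
  sInf {r | ∃ β : Fin p → ℝ, Ω (restrict S β) = 1 ∧ Ωc (restrict Sᶜ β) ≤ L ∧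
    r = normN (X.mulVec (restrict S β) - X.mulVec (restrict Sᶜ β))}

/-- The `Ω`-effective sparsity `Γ_Ω²(L,S) = 1/δ_Ω²(L,S)`. -/
noncomputable def effSparsity {n p : ℕ} (X : Matrix (Fin n) (Fin p) ℝ)
    (Ω Ωc : (Fin p → ℝ) → ℝ) (S : Finset (Fin p)) (L : ℝ) : ℝ :=
  1 / (omegaEigen X Ω Ωc S L) ^ 2

open MeasureTheory ProbabilityTheory

open scoped NNReal ENNReal

section aux
open Real

lemma gaussianPDFReal_mul_exp {v : ℝ≥0} (hv : (0:ℝ) < v) (t y : ℝ) :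
    Real.exp (t * y ^ 2) * gaussianPDFReal 0 v y
      = (Real.sqrt (2 * Real.pi * v))⁻¹
        * Real.exp (-((1 - 2 * t * (v:ℝ)) / (2 * (v:ℝ))) * y ^ 2) := by
  rw [gaussianPDFReal]
  rw [mul_comm (Real.exp _), mul_assoc, ← Real.exp_add]
  congr 1
  field_simp
  ring

lemma integrable_exp_sq_gaussian {v : ℝ≥0} (hv : v ≠ 0) {t : ℝ} (ht : 2 * t * (v:ℝ) < 1) :
    Integrable (fun y => Real.exp (t * y ^ 2)) (gaussianReal 0 v) := by
  have hv' : (0:ℝ) < v := by positivity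
  have hb : 0 < (1 - 2 * t * (v:ℝ)) / (2 * (v:ℝ)) := by
    apply div_pos (by linarith) (by linarith)
  rw [gaussianReal_of_var_ne_zero _ hv,
    integrable_withDensity_iff (measurable_gaussianPDF 0 v)
      (ae_of_all _ fun y => ENNReal.ofReal_lt_top)]
  have heq : (fun y => Real.exp (t * y ^ 2) * (gaussianPDF 0 v y).toReal)
      = fun y => (Real.sqrt (2 * Real.pi * v))⁻¹
        * Real.exp (-((1 - 2 * t * (v:ℝ)) / (2 * (v:ℝ))) * y ^ 2) := by
    funext y
    rw [gaussianPDF, ENNReal.toReal_ofReal (gaussianPDFReal_nonneg _ _ _),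
      gaussianPDFReal_mul_exp hv' t y]
  rw [heq]
  exact (integrable_exp_neg_mul_sq hb).const_mul _

lemma integral_exp_sq_gaussian {v : ℝ≥0} (hv : v ≠ 0) {t : ℝ} (ht : 2 * t * (v:ℝ) < 1) :
    ∫ y, Real.exp (t * y ^ 2) ∂(gaussianReal 0 v) = (Real.sqrt (1 - 2 * t * (v:ℝ)))⁻¹ := by
  have hv' : (0:ℝ) < v := by positivity
  set b : ℝ := (1 - 2 * t * (v:ℝ)) / (2 * (v:ℝ)) with hb_def
  have hb : 0 < b := div_pos (by linarith) (by linarith)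
  have hrw : gaussianPDF 0 v = fun y => ((Real.toNNReal (gaussianPDFReal 0 v y) : ℝ≥0) : ℝ≥0∞) :=
    rfl
  rw [gaussianReal_of_var_ne_zero _ hv, hrw,
    integral_withDensity_eq_integral_smul
      ((measurable_gaussianPDFReal 0 v).real_toNNReal) _]
  have key : (Real.sqrt (2 * Real.pi * (v:ℝ)))⁻¹ * Real.sqrt (Real.pi / b)
      = (Real.sqrt (1 - 2 * t * (v:ℝ)))⁻¹ := by
    have hpi : (0:ℝ) < Real.pi := Real.pi_pos
    have h1 : Real.pi / b = (2 * Real.pi * (v:ℝ)) * (1 - 2 * t * (v:ℝ))⁻¹ := by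
      rw [hb_def]; field_simp
    have h2 : Real.sqrt (Real.pi / b)
        = Real.sqrt (2 * Real.pi * (v:ℝ)) * Real.sqrt ((1 - 2 * t * (v:ℝ))⁻¹) := by
      rw [h1, Real.sqrt_mul (by positivity)]
    rw [h2, ← mul_assoc,
      inv_mul_cancel₀ (by positivity : Real.sqrt (2 * Real.pi * (v:ℝ)) ≠ 0), one_mul,
      Real.sqrt_inv]
  have heq : (fun y => Real.toNNReal (gaussianPDFReal 0 v y) • Real.exp (t * y ^ 2))
      = fun y => (Real.sqrt (2 * Real.pi * (v:ℝ)))⁻¹ * Real.exp (-b * y ^ 2) := by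
    funext y
    rw [NNReal.smul_def, smul_eq_mul, Real.coe_toNNReal _ (gaussianPDFReal_nonneg _ _ _),
      mul_comm, gaussianPDFReal_mul_exp hv' t y, hb_def]
  rw [heq, integral_const_mul, integral_gaussian, key]

end aux

/-- for i.i.d. `N(0,σ²)` errors and `x > 0`,
`P(‖ε‖_n² ≤ σ²(1 + 2x + 2x²)) ≥ 1 − exp(−n x²)`. -/
theorem chi_upper_tail {n : ℕ} {Ω' : Type*} [MeasurableSpace Ω']
    (μ : Measure Ω') [IsProbabilityMeasure μ]
    (ε : Ω' → Fin n → ℝ) (hmeas : ∀ i, Measurable fun ω => ε ω i)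
    (σ : ℝ) (hσ : 0 < σ)
    (hgauss : ∀ i, μ.map (fun ω => ε ω i) = gaussianReal 0 ⟨σ ^ 2, sq_nonneg σ⟩)
    (hindep : iIndepFun (fun i ω => ε ω i) μ)
    (x : ℝ) (hx : 0 < x) :
    1 - Real.exp (-(n : ℝ) * x ^ 2)
      ≤ (μ {ω | normN (ε ω) ^ 2 ≤ σ ^ 2 * (1 + 2 * x + 2 * x ^ 2)}).toReal := by
  rcases Nat.eq_zero_or_pos n with hn | hn
  · subst hn
    simp only [Nat.cast_zero, neg_zero, zero_mul, Real.exp_zero, sub_self]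
    exact ENNReal.toReal_nonneg
  have hn' : (0:ℝ) < n := by exact_mod_cast hn
  set u : ℝ := 1 + 2 * x + 2 * x ^ 2 with hu_def
  have hu1 : 1 < u := by nlinarith
  have hu0 : 0 < u := by linarith
  set v : ℝ≥0 := ⟨σ ^ 2, sq_nonneg σ⟩ with hv_def
  have hvR : (v : ℝ) = σ ^ 2 := rfl
  have hσ2 : (0:ℝ) < σ ^ 2 := by positivity
  have hv : v ≠ 0 := by
    intro h
    have := congrArg (fun w : ℝ≥0 => (w:ℝ)) h
    simp [hvR] at this
    exact hσ.ne' this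
  set t : ℝ := (u - 1) / (2 * σ ^ 2 * u) with ht_def
  have ht0 : 0 ≤ t := by
    apply div_nonneg (by linarith) (by positivity)
  have hkey : 1 - 2 * t * (v : ℝ) = u⁻¹ := by
    rw [hvR, ht_def]
    field_simp
    try ring
    try tauto
  have ht2 : 2 * t * (v : ℝ) < 1 := by
    have : (0:ℝ) < u⁻¹ := by positivity
    linarith [hkey]
  -- the squared coordinates
  set Y : Fin n → Ω' → ℝ := fun i ω => (ε ω i) ^ 2 with hY_def
  have hYmeas : ∀ i, Measurable (Y i) := fun i => (hmeas i).pow_const 2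
  have hYindep : iIndepFun Y μ :=
    hindep.comp (fun _ y => y ^ 2) (fun _ => measurable_id.pow_const 2)
  have hint : ∀ i, Integrable (fun ω => Real.exp (t * Y i ω)) μ := by
    intro i
    have h1 : Integrable (fun y => Real.exp (t * y ^ 2)) (μ.map (fun ω => ε ω i)) := by
      rw [hgauss i]; exact integrable_exp_sq_gaussian hv ht2
    have := (integrable_map_measure
      (by rw [hgauss i]
          exact (((measurable_id.pow_const 2).const_mul t).exp).aestronglyMeasurable)
      (hmeas i).aemeasurable).mp h1
    exact this
  have hmgf : ∀ i, mgf (Y i) μ t = Real.sqrt u := by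
    intro i
    have h1 : mgf (Y i) μ t = ∫ y, Real.exp (t * y ^ 2) ∂(μ.map (fun ω => ε ω i)) := by
      rw [mgf, integral_map (hmeas i).aemeasurable
        (by rw [hgauss i]
            exact (((measurable_id.pow_const 2).const_mul t).exp).aestronglyMeasurable)]
    rw [h1, hgauss i, integral_exp_sq_gaussian hv ht2, hkey, Real.sqrt_inv, inv_inv]
  -- Chernoff bound for the sum
  set c : ℝ := (n : ℝ) * (σ ^ 2 * u) with hc_def
  have hint_sum : Integrable (fun ω => Real.exp (t * (∑ i, Y i) ω)) μ :=
    hYindep.integrable_exp_mul_sum hYmeas (fun i _ => hint i)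
  have hchern := measure_ge_le_exp_mul_mgf (X := ∑ i, Y i) (μ := μ) c ht0 hint_sum
  rw [hYindep.mgf_sum hYmeas Finset.univ] at hchern
  have hprod : ∏ i : Fin n, mgf (Y i) μ t = (Real.sqrt u) ^ n := by
    simp [hmgf]
  rw [hprod] at hchern
  have hbound : Real.exp (-t * c) * (Real.sqrt u) ^ n ≤ Real.exp (-(n:ℝ) * x ^ 2) := by
    have hsq : Real.sqrt u ≤ Real.exp x := by
      have h1 : u ≤ (Real.exp x) ^ 2 := by
        have h2 : 1 + 2 * x + (2 * x) ^ 2 / 2 ≤ Real.exp (2 * x) :=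
          Real.quadratic_le_exp_of_nonneg (by linarith)
        have h3 : Real.exp (2 * x) = (Real.exp x) ^ 2 := by
          rw [← Real.exp_nat_mul]; ring_nf
        nlinarith [h2, h3]
      calc Real.sqrt u ≤ Real.sqrt ((Real.exp x) ^ 2) := Real.sqrt_le_sqrt h1
        _ = Real.exp x := Real.sqrt_sq (Real.exp_pos x).le
    have hsqn : (Real.sqrt u) ^ n ≤ (Real.exp x) ^ n :=
      pow_le_pow_left₀ (Real.sqrt_nonneg u) hsq n
    have htc : t * c = (n:ℝ) * (u - 1) / 2 := by
      rw [ht_def, hc_def]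
      field_simp
    calc Real.exp (-t * c) * (Real.sqrt u) ^ n
        ≤ Real.exp (-t * c) * (Real.exp x) ^ n := by
          exact mul_le_mul_of_nonneg_left hsqn (Real.exp_pos _).le
      _ = Real.exp (-t * c + (n:ℝ) * x) := by
          rw [← Real.exp_nat_mul, ← Real.exp_add]
      _ = Real.exp (-(n:ℝ) * x ^ 2) := by
          congr 1
          rw [neg_mul, htc, hu_def]
          ring
  have hchern2 : (μ {ω | c ≤ (∑ i, Y i) ω}).toReal ≤ Real.exp (-(n:ℝ) * x ^ 2) :=
    hchern.trans hbound
  -- relate the events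
  set A : Set Ω' := {ω | normN (ε ω) ^ 2 ≤ σ ^ 2 * u} with hA_def
  have hAeq : A = {ω | (∑ i, (ε ω i) ^ 2) ≤ c} := by
    ext ω
    simp only [hA_def, Set.mem_setOf_eq, normN, hc_def]
    rw [Real.sq_sqrt (by positivity : (0:ℝ) ≤ (∑ j, ε ω j ^ 2) / n)]
    rw [div_le_iff₀ hn']
    constructor
    · intro h; linarith [h]
    · intro h; linarith [h]
  have hsub : Aᶜ ⊆ {ω | c ≤ (∑ i, Y i) ω} := by
    intro ω hω
    rw [hAeq] at hω
    simp only [Set.mem_compl_iff, Set.mem_setOf_eq, not_le] at hω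
    simp only [Set.mem_setOf_eq, Finset.sum_apply]
    exact le_of_lt hω
  have hAmeas : MeasurableSet A := by
    rw [hAeq]
    exact measurableSet_le (by exact Finset.measurable_sum _ (fun i _ => (hmeas i).pow_const 2))
      measurable_const
  have h1 : (μ Aᶜ).toReal ≤ Real.exp (-(n:ℝ) * x ^ 2) :=
    le_trans (ENNReal.toReal_mono (measure_ne_top μ _) (measure_mono hsub)) hchern2
  have h2 : (μ A).toReal + (μ Aᶜ).toReal = 1 := by
    have := measure_add_measure_compl hAmeas (μ := μ)
    have h3 := congrArg ENNReal.toReal this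
    rw [ENNReal.toReal_add (measure_ne_top μ _) (measure_ne_top μ _)] at h3
    simpa using h3
  linarith
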